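/- Let ρ > 0, σ = ±1, φ ∈ ℝ, λ ∈ ℂ with λ ≠ iσρ and λ ≠ −iσρ, μ = √(λ² + ρ²), χ = x − 2iλt, and α, β nonzero complex constants. Then f(x,t) = e^{iρ²t + iφ/2}(α e^{μχ} + β e^{−μχ}) and g(x,t) = e^{−iρ²t − iφ/2}[(α(μ−λ)/ρ) e^{μχ} − (β(μ+λ)/ρ) e^{−μχ}] satisfy the Lax pair equations Ψ_x = UΨ, Ψ_t = VΨ with potential u = ρ e^{2iρ²t + iφ}, û = ρ e^{−2iρ²t − iφ}, and ε = −1. -/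

import Mathlib

open Complex

private lemma exp_deriv_x (ν w : ℂ) (x : ℝ) :
    HasDerivAt (fun y : ℝ => Complex.exp (ν * ((y : ℂ) - w)))
      (ν * Complex.exp (ν * ((x : ℂ) - w))) x := by
  have h : HasDerivAt (fun z : ℂ => Complex.exp (ν * (z - w)))
      (Complex.exp (ν * ((x:ℂ) - w)) * (ν * 1)) (x:ℂ) :=
    (((hasDerivAt_id ((x:ℂ))).sub_const w).const_mul ν).cexp
  simpa [mul_comm] using h.comp_ofReal

private lemma exp_deriv_t (ν c xx : ℂ) (t : ℝ) :
    HasDerivAt (fun s : ℝ => Complex.exp (ν * (xx - c * (s:ℂ))))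
      (-(ν * c) * Complex.exp (ν * (xx - c * (t:ℂ)))) t := by
  have h : HasDerivAt (fun z : ℂ => Complex.exp (ν * (xx - c * z)))
      (Complex.exp (ν * (xx - c * (t:ℂ))) * (ν * -(c * 1))) (t:ℂ) :=
    ((((hasDerivAt_id ((t:ℂ))).const_mul c).const_sub xx).const_mul ν).cexp
  simpa [mul_comm] using h.comp_ofReal

private lemma exp_deriv_t2 (a b : ℂ) (t : ℝ) :
    HasDerivAt (fun s : ℝ => Complex.exp (a * (s:ℂ) + b))
      (a * Complex.exp (a * (t:ℂ) + b)) t := by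
  have h : HasDerivAt (fun z : ℂ => Complex.exp (a * z + b))
      (Complex.exp (a * (t:ℂ) + b) * (a * 1)) (t:ℂ) :=
    (((hasDerivAt_id ((t:ℂ))).const_mul a).add_const b).cexp
  simpa [mul_comm] using h.comp_ofReal

/-- The explicit exponential eigenfunctions `(f, g)ᵀ` solve the Lax pair of the
defocusing nonlocal NLS equation (`ε = −1`) with the plane-wave potential
`u = ρ e^{2iρ²t+iφ}`, `û = ρ e^{−2iρ²t−iφ}`. -/
theorem exponential_eigenfunctions_solve_lax_pair (ρ σ φ : ℝ) (hρ : 0 < ρ)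
    (hσ : σ = 1 ∨ σ = -1) (lam μ α β : ℂ) (hα : α ≠ 0) (hβ : β ≠ 0)
    (hlam1 : lam ≠ Complex.I * σ * ρ) (hlam2 : lam ≠ -(Complex.I * σ * ρ))
    (hμ : μ ^ 2 = lam ^ 2 + (ρ : ℂ) ^ 2)
    (f g u uh : ℝ → ℝ → ℂ)
    (hf : ∀ x t : ℝ, f x t =
      Complex.exp (Complex.I * ρ ^ 2 * t + Complex.I * φ / 2) *
        (α * Complex.exp (μ * ((x : ℂ) - 2 * Complex.I * lam * t))
          + β * Complex.exp (-(μ * ((x : ℂ) - 2 * Complex.I * lam * t)))))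
    (hg : ∀ x t : ℝ, g x t =
      Complex.exp (-(Complex.I * ρ ^ 2 * t) - Complex.I * φ / 2) *
        ((α * (μ - lam) / ρ) * Complex.exp (μ * ((x : ℂ) - 2 * Complex.I * lam * t))
          - (β * (μ + lam) / ρ) * Complex.exp (-(μ * ((x : ℂ) - 2 * Complex.I * lam * t)))))
    (hu : ∀ x t : ℝ, u x t = (ρ : ℂ) * Complex.exp (2 * Complex.I * ρ ^ 2 * t + Complex.I * φ))
    (huh : ∀ x t : ℝ, uh x t =
      (ρ : ℂ) * Complex.exp (-(2 * Complex.I * ρ ^ 2 * t) - Complex.I * φ)) :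
    ∀ x t : ℝ,
      HasDerivAt (fun y : ℝ => f y t) (lam * f x t + u x t * g x t) x ∧
      HasDerivAt (fun y : ℝ => g y t) (uh x t * f x t - lam * g x t) x ∧
      HasDerivAt (fun s : ℝ => f x s)
        ((-(2 * Complex.I * lam ^ 2) + Complex.I * u x t * uh x t) * f x t
          + (-(2 * Complex.I * lam * u x t)) * g x t) t ∧
      HasDerivAt (fun s : ℝ => g x s)
        ((-(2 * Complex.I * lam * uh x t)) * f x t
          + (2 * Complex.I * lam ^ 2 - Complex.I * u x t * uh x t) * g x t) t := by
  have hρ0 : (ρ : ℂ) ≠ 0 := Complex.ofReal_ne_zero.mpr hρ.ne'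
  have hrr : (ρ : ℂ) * (ρ : ℂ)⁻¹ = 1 := mul_inv_cancel₀ hρ0
  intro x t
  set w : ℂ := Complex.exp (Complex.I * ρ ^ 2 * t + Complex.I * φ / 2) with hwdef
  set v : ℂ := Complex.exp (-(Complex.I * ρ ^ 2 * t) - Complex.I * φ / 2) with hvdef
  set E : ℂ := Complex.exp (μ * ((x : ℂ) - 2 * Complex.I * lam * t)) with hEdef
  set F : ℂ := Complex.exp (-(μ * ((x : ℂ) - 2 * Complex.I * lam * t))) with hFdef
  have hwv : w * v = 1 := by
    rw [hwdef, hvdef, ← Complex.exp_add,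
      show Complex.I * (ρ:ℂ) ^ 2 * t + Complex.I * φ / 2
        + (-(Complex.I * ρ ^ 2 * t) - Complex.I * φ / 2) = 0 by ring, Complex.exp_zero]
  have hEF : E * F = 1 := by
    rw [hEdef, hFdef, ← Complex.exp_add, add_neg_cancel, Complex.exp_zero]
  have hw2 : Complex.exp (2 * Complex.I * ρ ^ 2 * t + Complex.I * φ) = w * w := by
    rw [show 2 * Complex.I * (ρ:ℂ) ^ 2 * t + Complex.I * φ
        = (Complex.I * ρ ^ 2 * t + Complex.I * φ / 2) + (Complex.I * ρ ^ 2 * t + Complex.I * φ / 2)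
        by ring, Complex.exp_add, hwdef]
  have hv2 : Complex.exp (-(2 * Complex.I * ρ ^ 2 * t) - Complex.I * φ) = v * v := by
    rw [show -(2 * Complex.I * (ρ:ℂ) ^ 2 * t) - Complex.I * φ
        = (-(Complex.I * ρ ^ 2 * t) - Complex.I * φ / 2)
          + (-(Complex.I * ρ ^ 2 * t) - Complex.I * φ / 2) by ring, Complex.exp_add, hvdef]
  have hE2 : Complex.exp ((-μ) * ((x : ℂ) - 2 * Complex.I * lam * t)) = F := by
    rw [neg_mul]
  have hv' : Complex.exp ((-(Complex.I * ρ ^ 2)) * (t:ℂ) + -(Complex.I * φ / 2)) = v := by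
    rw [show (-(Complex.I * (ρ:ℂ) ^ 2)) * (t:ℂ) + -(Complex.I * (φ:ℂ) / 2)
        = -(Complex.I * ρ ^ 2 * t) - Complex.I * φ / 2 by ring]
  clear_value w v E F
  have hEneg : ∀ y : ℝ, Complex.exp (-(μ * ((y : ℂ) - 2 * Complex.I * lam * t)))
      = Complex.exp ((-μ) * ((y : ℂ) - 2 * Complex.I * lam * t)) := fun y => by ring_nf
  have hEnegt : ∀ s : ℝ, Complex.exp (-(μ * ((x : ℂ) - 2 * Complex.I * lam * s)))
      = Complex.exp ((-μ) * ((x : ℂ) - 2 * Complex.I * lam * s)) := fun s => by ring_nf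
  refine ⟨?_, ?_, ?_, ?_⟩
  · -- f_x
    have h := (((exp_deriv_x μ (2 * Complex.I * lam * t) x).const_mul α).add
        ((exp_deriv_x (-μ) (2 * Complex.I * lam * t) x).const_mul β)).const_mul w
    have hfun : (fun y : ℝ => f y t)
        = fun y : ℝ => w * (α * Complex.exp (μ * ((y : ℂ) - 2 * Complex.I * lam * t))
          + β * Complex.exp ((-μ) * ((y : ℂ) - 2 * Complex.I * lam * t))) := by
      funext y; rw [hf y t, hEneg y, ← hwdef]
    rw [hfun]
    convert h using 1
    · exact rfl
    · exact rfl
    rw [hf x t, hg x t, hu x t, hw2, hE2, ← hwdef, ← hvdef, ← hEdef, ← hFdef]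
    linear_combination ((-1:ℂ) * w * F * (ρ:ℂ)⁻¹ * (ρ:ℂ) * μ * β + (-1:ℂ) * w * F * (ρ:ℂ)⁻¹ * (ρ:ℂ) * lam * β + (1:ℂ) * w * E * (ρ:ℂ)⁻¹ * (ρ:ℂ) * μ * α + (-1:ℂ) * w * E * (ρ:ℂ)⁻¹ * (ρ:ℂ) * lam * α) * hwv
      + ((-1:ℂ) * w * F * μ * β + (-1:ℂ) * w * F * lam * β + (1:ℂ) * w * E * μ * α + (-1:ℂ) * w * E * lam * α) * hrr
  · -- g_x
    have h := (((exp_deriv_x μ (2 * Complex.I * lam * t) x).const_mul (α * (μ - lam) / ρ)).sub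
        ((exp_deriv_x (-μ) (2 * Complex.I * lam * t) x).const_mul (β * (μ + lam) / ρ))).const_mul v
    have hfun : (fun y : ℝ => g y t)
        = fun y : ℝ => v * ((α * (μ - lam) / ρ) * Complex.exp (μ * ((y : ℂ) - 2 * Complex.I * lam * t))
          - (β * (μ + lam) / ρ) * Complex.exp ((-μ) * ((y : ℂ) - 2 * Complex.I * lam * t))) := by
      funext y; rw [hg y t, hEneg y, ← hvdef]
    rw [hfun]
    convert h using 1
    · exact rfl
    · exact rfl
    rw [hf x t, hg x t, huh x t, hv2, hE2, ← hwdef, ← hvdef, ← hEdef, ← hFdef]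
    linear_combination ((1:ℂ) * v * F * (ρ:ℂ) * β + (1:ℂ) * v * E * (ρ:ℂ) * α) * hwv
      + ((-1:ℂ) * v * F * (ρ:ℂ) * β + (-1:ℂ) * v * E * (ρ:ℂ) * α) * hrr
      + ((-1:ℂ) * v * F * (ρ:ℂ)⁻¹ * β + (-1:ℂ) * v * E * (ρ:ℂ)⁻¹ * α) * hμ
  · -- f_t
    have h := (exp_deriv_t2 (Complex.I * ρ ^ 2) (Complex.I * φ / 2) t).mul
        (((exp_deriv_t μ (2 * Complex.I * lam) (x:ℂ) t).const_mul α).add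
          ((exp_deriv_t (-μ) (2 * Complex.I * lam) (x:ℂ) t).const_mul β))
    have hfun : (fun s : ℝ => f x s)
        = fun s : ℝ => Complex.exp (Complex.I * ρ ^ 2 * (s:ℂ) + Complex.I * φ / 2)
          * (α * Complex.exp (μ * ((x : ℂ) - 2 * Complex.I * lam * s))
            + β * Complex.exp ((-μ) * ((x : ℂ) - 2 * Complex.I * lam * s))) := by
      funext s; rw [hf x s, hEnegt s]
    rw [hfun]
    convert h using 1
    · exact rfl
    · exact rfl
    simp only [Pi.add_apply, Pi.sub_apply]
    rw [hf x t, hg x t, hu x t, huh x t, hw2, hv2, hE2, ← hwdef, ← hvdef, ← hEdef, ← hFdef]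
    linear_combination (((1:ℂ) * Complex.I) * w * F * (ρ:ℂ) * (ρ:ℂ) * β + ((2:ℂ) * Complex.I) * w * F * (ρ:ℂ)⁻¹ * (ρ:ℂ) * lam * μ * β + ((2:ℂ) * Complex.I) * w * F * (ρ:ℂ)⁻¹ * (ρ:ℂ) * lam * lam * β + ((1:ℂ) * Complex.I) * w * E * (ρ:ℂ) * (ρ:ℂ) * α + ((-2:ℂ) * Complex.I) * w * E * (ρ:ℂ)⁻¹ * (ρ:ℂ) * lam * μ * α + ((2:ℂ) * Complex.I) * w * E * (ρ:ℂ)⁻¹ * (ρ:ℂ) * lam * lam * α + ((1:ℂ) * Complex.I) * w * w * v * F * (ρ:ℂ) * (ρ:ℂ) * β + ((1:ℂ) * Complex.I) * w * w * v * E * (ρ:ℂ) * (ρ:ℂ) * α) * hwv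
      + (((2:ℂ) * Complex.I) * w * F * lam * μ * β + ((2:ℂ) * Complex.I) * w * F * lam * lam * β + ((-2:ℂ) * Complex.I) * w * E * lam * μ * α + ((2:ℂ) * Complex.I) * w * E * lam * lam * α) * hrr
  · -- g_t
    have h0 := (exp_deriv_t2 (-(Complex.I * ρ ^ 2)) (-(Complex.I * φ / 2)) t)
    have h := h0.mul
        (((exp_deriv_t μ (2 * Complex.I * lam) (x:ℂ) t).const_mul (α * (μ - lam) / ρ)).sub
          ((exp_deriv_t (-μ) (2 * Complex.I * lam) (x:ℂ) t).const_mul (β * (μ + lam) / ρ)))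
    have hfun : (fun s : ℝ => g x s)
        = fun s : ℝ => Complex.exp ((-(Complex.I * ρ ^ 2)) * (s:ℂ) + -(Complex.I * φ / 2))
          * ((α * (μ - lam) / ρ) * Complex.exp (μ * ((x : ℂ) - 2 * Complex.I * lam * s))
            - (β * (μ + lam) / ρ) * Complex.exp ((-μ) * ((x : ℂ) - 2 * Complex.I * lam * s))) := by
      funext s
      rw [hg x s, hEnegt s, show -(Complex.I * (ρ:ℂ) ^ 2 * s) - Complex.I * (φ:ℂ) / 2
        = (-(Complex.I * (ρ:ℂ) ^ 2)) * (s:ℂ) + -(Complex.I * (φ:ℂ) / 2) by ring]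
    rw [hfun]
    convert h using 1
    · exact rfl
    · exact rfl
    simp only [Pi.add_apply, Pi.sub_apply]
    rw [hf x t, hg x t, hu x t, huh x t, hw2, hv2, hE2, hv', ← hwdef, ← hvdef, ← hEdef, ← hFdef]
    linear_combination (((-2:ℂ) * Complex.I) * v * F * (ρ:ℂ) * lam * β + ((1:ℂ) * Complex.I) * v * F * (ρ:ℂ)⁻¹ * (ρ:ℂ) * (ρ:ℂ) * μ * β + ((1:ℂ) * Complex.I) * v * F * (ρ:ℂ)⁻¹ * (ρ:ℂ) * (ρ:ℂ) * lam * β + ((-2:ℂ) * Complex.I) * v * E * (ρ:ℂ) * lam * α + ((-1:ℂ) * Complex.I) * v * E * (ρ:ℂ)⁻¹ * (ρ:ℂ) * (ρ:ℂ) * μ * α + ((1:ℂ) * Complex.I) * v * E * (ρ:ℂ)⁻¹ * (ρ:ℂ) * (ρ:ℂ) * lam * α + ((1:ℂ) * Complex.I) * w * v * v * F * (ρ:ℂ)⁻¹ * (ρ:ℂ) * (ρ:ℂ) * μ * β + ((1:ℂ) * Complex.I) * w * v * v * F * (ρ:ℂ)⁻¹ * (ρ:ℂ) * (ρ:ℂ)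 * lam * β + ((-1:ℂ) * Complex.I) * w * v * v * E * (ρ:ℂ)⁻¹ * (ρ:ℂ) * (ρ:ℂ) * μ * α + ((1:ℂ) * Complex.I) * w * v * v * E * (ρ:ℂ)⁻¹ * (ρ:ℂ) * (ρ:ℂ) * lam * α) * hwv
      + (((2:ℂ) * Complex.I) * v * F * (ρ:ℂ) * lam * β + ((2:ℂ) * Complex.I) * v * E * (ρ:ℂ) * lam * α) * hrr
      + (((2:ℂ) * Complex.I) * v * F * (ρ:ℂ)⁻¹ * lam * β + ((2:ℂ) * Complex.I) * v * E * (ρ:ℂ)⁻¹ * lam * α) * hμ
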